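/- With P_max defined as the chain-infimum of δ̂, P_max satisfies data processing: for every CPTP map E and all density operators ρ, σ, P_max(E[ρ], E[σ]) ≤ P_max(ρ,σ). -/

import Mathlib

open Matrix BigOperators ComplexOrder

variable {n : Type*} [Fintype n] [DecidableEq n]

/-- Trace norm (Schatten 1-norm) of a matrix. -/
noncomputable def traceNorm (A : Matrix n n ℂ) : ℝ :=
  (((Matrix.posSemidef_conjTranspose_mul_self A).1.eigenvectorUnitary : Matrix n n ℂ) *
    diagonal (((↑) : ℝ → ℂ) ∘ Real.sqrt ∘ (Matrix.posSemidef_conjTranspose_mul_self A).1.eigenvalues) *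
    (star (Matrix.posSemidef_conjTranspose_mul_self A).1.eigenvectorUnitary : Matrix n n ℂ)).trace.re

/-- A density operator: positive semidefinite with trace 1. -/
def IsDensity (ρ : Matrix n n ℂ) : Prop := ρ.PosSemidef ∧ ρ.trace = 1

/-- δ̃(ρ,σ): smallest mixing weight ε with ρ = (1-ε)σ + εσ'. -/
noncomputable def deltaTilde (ρ σ : Matrix n n ℂ) : ℝ :=
  sInf {ε : ℝ | ε ∈ Set.Icc (0:ℝ) 1 ∧
    ∃ σ' : Matrix n n ℂ, IsDensity σ' ∧ ρ = (1 - ε) • σ + ε • σ'}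

/-- δ̂ = min of δ̃ in both orders. -/
noncomputable def deltaHat (ρ σ : Matrix n n ℂ) : ℝ :=
  min (deltaTilde ρ σ) (deltaTilde σ ρ)

/-- P_max: infimum over finite chains of density operators from ρ to σ of the
sum of δ̂ over consecutive pairs. -/
noncomputable def Pmax (ρ σ : Matrix n n ℂ) : ℝ :=
  sInf {s : ℝ | ∃ (m : ℕ) (ω : Fin (m + 1) → Matrix n n ℂ),
    ω 0 = ρ ∧ ω (Fin.last m) = σ ∧ (∀ i, IsDensity (ω i)) ∧
    s = ∑ i : Fin m, deltaHat (ω i.castSucc) (ω i.succ)}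

/-- Choi matrix of a linear map on matrices. -/
noncomputable def choi {m : Type*} [Fintype m] [DecidableEq m]
    (E : Matrix n n ℂ →ₗ[ℂ] Matrix m m ℂ) : Matrix (n × m) (n × m) ℂ :=
  fun p q => E (Matrix.single p.1 q.1 1) p.2 q.2

/-- Completely positive trace-preserving map: Choi matrix PSD (Choi's theorem)
and trace preservation. -/
def IsCPTP {m : Type*} [Fintype m] [DecidableEq m]
    (E : Matrix n n ℂ →ₗ[ℂ] Matrix m m ℂ) : Prop :=
  (choi E).PosSemidef ∧ ∀ A : Matrix n n ℂ, (E A).trace = A.trace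

set_option linter.unusedSectionVars false

section Aux

variable {μ : Type*} [Fintype μ] [DecidableEq μ]

lemma map_entry (E : Matrix n n ℂ →ₗ[ℂ] Matrix μ μ ℂ) (A : Matrix n n ℂ) (i j : μ) :
    E A i j = ∑ p : n, ∑ q : n, A p q * choi E (p, i) (q, j) := by
  conv_lhs => rw [Matrix.matrix_eq_sum_single A]
  rw [map_sum, Matrix.sum_apply]
  refine Finset.sum_congr rfl fun p _ => ?_
  rw [map_sum, Matrix.sum_apply]
  refine Finset.sum_congr rfl fun q _ => ?_
  have h : Matrix.single p q (A p q) = A p q • Matrix.single p q (1:ℂ) := by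
    rw [Matrix.smul_single, smul_eq_mul, mul_one]
  rw [h, E.map_smul, Matrix.smul_apply, smul_eq_mul]
  rfl

open scoped MatrixOrder in
lemma cptp_posSemidef (E : Matrix n n ℂ →ₗ[ℂ] Matrix μ μ ℂ)
    (hC : (choi E).PosSemidef) {A : Matrix n n ℂ} (hA : A.PosSemidef) :
    (E A).PosSemidef := by
  set B := CFC.sqrt A with hBdef
  have hBH : Bᴴ = B := (CFC.sqrt_nonneg A).isSelfAdjoint
  have hAB : ∀ p q, A p q = ∑ k : n, star (B k p) * B k q := by
    intro p q
    have : A = Bᴴ * B := by rw [hBH, CFC.sqrt_mul_sqrt_self A hA.nonneg]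
    rw [this, Matrix.mul_apply]
    exact Finset.sum_congr rfl fun k _ => rfl
  refine Matrix.PosSemidef.of_dotProduct_mulVec_nonneg ?_ ?_
  · ext i j
    rw [Matrix.conjTranspose_apply, map_entry, map_entry, star_sum]
    rw [Finset.sum_comm]
    refine Finset.sum_congr rfl fun p _ => ?_
    rw [star_sum]
    refine Finset.sum_congr rfl fun q _ => ?_
    rw [star_mul', hA.1.apply, hC.1.apply]
  · intro x
    set y : n → (n × μ) → ℂ := fun k z => B k z.1 * x z.2 with hy
    have key : star x ⬝ᵥ (E A) *ᵥ x = ∑ k : n, star (y k) ⬝ᵥ choi E *ᵥ y k := by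
      set F : ((n × μ) × n × μ) → n → ℂ := fun z k =>
        star (B k z.1.1 * x z.1.2) * (choi E z.1 z.2 * (B k z.2.1 * x z.2.2)) with hF
      have lhs_eq : star x ⬝ᵥ (E A) *ᵥ x = ∑ z : (n × μ) × n × μ, ∑ k : n, F z k := by
        simp only [dotProduct, mulVec, map_entry, Pi.star_apply, Fintype.sum_prod_type]
        rw [Finset.sum_comm]
        refine Finset.sum_congr rfl fun p _ => ?_
        simp only [hAB, Finset.sum_mul, Finset.mul_sum]
        rw [Finset.sum_comm]
        refine Finset.sum_congr rfl fun p1 _ => ?_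
        rw [Finset.sum_comm]
        refine Finset.sum_congr rfl fun q _ => ?_
        refine Finset.sum_congr rfl fun j _ => ?_
        refine Finset.sum_congr rfl fun k _ => ?_
        simp only [hF, star_mul']
        ring
      have rhs_eq : ∀ k, star (y k) ⬝ᵥ choi E *ᵥ y k = ∑ z : (n × μ) × n × μ, F z k := by
        intro k
        simp only [dotProduct, mulVec, Pi.star_apply, Fintype.sum_prod_type, hy, hF,
          Finset.mul_sum]
      rw [lhs_eq, Finset.sum_comm]
      exact (Finset.sum_congr rfl fun k _ => (rhs_eq k).symm)
    rw [key]
    exact Finset.sum_nonneg fun k _ => hC.dotProduct_mulVec_nonneg (y k)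

lemma cptp_density (E : Matrix n n ℂ →ₗ[ℂ] Matrix μ μ ℂ) (hE : IsCPTP E)
    {ρ : Matrix n n ℂ} (hρ : IsDensity ρ) : IsDensity (E ρ) :=
  ⟨cptp_posSemidef E hE.1 hρ.1, by rw [hE.2, hρ.2]⟩

lemma deltaTilde_nonneg (ρ σ : Matrix n n ℂ) : 0 ≤ deltaTilde ρ σ :=
  Real.sInf_nonneg fun _ hx => hx.1.1

lemma deltaHat_nonneg (ρ σ : Matrix n n ℂ) : 0 ≤ deltaHat ρ σ :=
  le_min (deltaTilde_nonneg ρ σ) (deltaTilde_nonneg σ ρ)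

lemma deltaTilde_dp (E : Matrix n n ℂ →ₗ[ℂ] Matrix μ μ ℂ) (hE : IsCPTP E)
    {ρ σ : Matrix n n ℂ} (hρ : IsDensity ρ) :
    deltaTilde (E ρ) (E σ) ≤ deltaTilde ρ σ := by
  apply csInf_le_csInf
  · exact ⟨0, fun x hx => hx.1.1⟩
  · exact ⟨1, ⟨zero_le_one, le_refl _⟩, ρ, hρ, by simp⟩
  · rintro ε ⟨hεI, σ', hσ', hmix⟩
    exact ⟨hεI, E σ', cptp_density E hE hσ', by rw [hmix, map_add, LinearMap.map_smul_of_tower, LinearMap.map_smul_of_tower]⟩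

lemma deltaHat_dp (E : Matrix n n ℂ →ₗ[ℂ] Matrix μ μ ℂ) (hE : IsCPTP E)
    {ρ σ : Matrix n n ℂ} (hρ : IsDensity ρ) (hσ : IsDensity σ) :
    deltaHat (E ρ) (E σ) ≤ deltaHat ρ σ :=
  min_le_min (deltaTilde_dp E hE hρ) (deltaTilde_dp E hE hσ)

end Aux


theorem Pmax_data_processing {m : Type*} [Fintype m] [DecidableEq m]
    (E : Matrix n n ℂ →ₗ[ℂ] Matrix m m ℂ) (hE : IsCPTP E)
    (ρ σ : Matrix n n ℂ) (hρ : IsDensity ρ) (hσ : IsDensity σ) :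
    Pmax (E ρ) (E σ) ≤ Pmax ρ σ := by
  have hbdd : BddBelow {s : ℝ | ∃ (k : ℕ) (ω : Fin (k + 1) → Matrix m m ℂ),
      ω 0 = E ρ ∧ ω (Fin.last k) = E σ ∧ (∀ i, IsDensity (ω i)) ∧
      s = ∑ i : Fin k, deltaHat (ω i.castSucc) (ω i.succ)} := by
    refine ⟨0, ?_⟩
    rintro s ⟨k, ω, h0, hl, hd, rfl⟩
    exact Finset.sum_nonneg fun i _ => deltaHat_nonneg _ _
  have hne : {s : ℝ | ∃ (k : ℕ) (ω : Fin (k + 1) → Matrix n n ℂ),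
      ω 0 = ρ ∧ ω (Fin.last k) = σ ∧ (∀ i, IsDensity (ω i)) ∧
      s = ∑ i : Fin k, deltaHat (ω i.castSucc) (ω i.succ)}.Nonempty := by
    refine ⟨deltaHat ρ σ, 1, ![ρ, σ], rfl, rfl, ?_, by simp⟩
    intro i
    fin_cases i <;> simpa
  refine le_csInf hne ?_
  rintro s ⟨k, ω, h0, hl, hd, rfl⟩
  calc Pmax (E ρ) (E σ) ≤ ∑ i : Fin k, deltaHat (E (ω i.castSucc)) (E (ω i.succ)) := by
        apply csInf_le hbdd
        exact ⟨k, fun i => E (ω i), congrArg E h0, congrArg E hl,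
          fun i => cptp_density E hE (hd i), rfl⟩
    _ ≤ ∑ i : Fin k, deltaHat (ω i.castSucc) (ω i.succ) :=
        Finset.sum_le_sum fun i _ => deltaHat_dp E hE (hd i.castSucc) (hd i.succ)
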